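/- For all n ≥ 3, φ(n) ≥ 3·(φ(n-1))². -/

import Mathlib

/-- `F n = (a n ·, b n ·, φ n)` from the recursive construction;
    `φ 1 := 1` by convention. -/
def F : ℕ → ((ℕ → ℚ) × (ℕ → ℚ) × ℚ)
  | 0 => (fun _ => 0, fun _ => 0, 1)
  | 1 => (fun j => if j = 1 then 1 else 0, fun j => if j = 1 then 1 else 0, 1)
  | (n+2) =>
      let p := F (n+1)
      let th : ℚ := 3 * p.1 (n+1)
      let ph : ℚ := if n = 0 then 4
        else 4 * ∑ j ∈ Finset.Icc 1 (n+1), (th * p.2.1 j - 3 * p.1 j)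
      (fun j => if j = n+2 then ph else 4 * p.1 j,
       fun j => if j = n+2 then 1 else (1 + th) * p.2.1 j,
       ph)

/-- coefficient `a(n,j)` -/
def a (n j : ℕ) : ℚ := (F n).1 j
/-- coefficient `b(n,j)` -/
def b (n j : ℕ) : ℚ := (F n).2.1 j
/-- `φ(n)` -/
def phi (n : ℕ) : ℚ := (F n).2.2
/-- `θ(n) = 3·a(n-1,n-1)` -/
def theta (n : ℕ) : ℚ := 3 * a (n-1) (n-1)

/-- The diagonal entry `a(n,n)` equals `φ(n)`. -/
lemma a_top : ∀ n, 1 ≤ n → a n n = phi n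
  | 1, _ => by simp [a, phi, F]
  | (k+2), _ => by simp [a, phi, F]

lemma phi_key (k : ℕ) : phi (k+3) =
    4 * ∑ j ∈ Finset.Icc 1 (k+2),
      (3 * a (k+2) (k+2) * b (k+2) j - 3 * a (k+2) j) := by
  have : phi (k+3) = if k+1 = 0 then 4 else
      4 * ∑ j ∈ Finset.Icc 1 (k+2),
        (3 * a (k+2) (k+2) * b (k+2) j - 3 * a (k+2) j) := rfl
  rw [this, if_neg (Nat.succ_ne_zero k)]

/-- The main recursion for `φ`. -/
lemma phi_succ (k : ℕ) :
    phi (k+3) = 12 * ∑ j ∈ Finset.Icc 1 (k+2),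
      (phi (k+2) * b (k+2) j - a (k+2) j) := by
  rw [phi_key, a_top (k+2) (by omega), Finset.mul_sum, Finset.mul_sum]
  exact Finset.sum_congr rfl fun j _ => by ring

lemma a_succ (k j : ℕ) (h : j ≠ k + 2) : a (k+2) j = 4 * a (k+1) j := by
  simp only [a, F.eq_3, if_neg h]

lemma b_succ (k j : ℕ) (h : j ≠ k + 2) :
    b (k+2) j = (1 + 3 * phi (k+1)) * b (k+1) j := by
  have ha : (F (k+1)).1 (k+1) = phi (k+1) := a_top (k+1) (by omega)
  simp only [b, F.eq_3, if_neg h, ha]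

lemma b_top (k : ℕ) : b (k+2) (k+2) = 1 := by simp [b, F.eq_3]

lemma phi_two : phi 2 = 4 := by simp [phi, F]

lemma phi_three : phi 3 = 144 := by
  have h := phi_succ 0
  norm_num at h
  rw [h, show Finset.Icc 1 2 = {1,2} from rfl, Finset.sum_insert (by decide),
    Finset.sum_singleton]
  norm_num [a, b, phi, F]

/-- Master invariant: positivity of the coefficients, `φ(n) ≥ 4`,
    domination `a(n,j) ≤ φ(n)·b(n,j)`, and `1 ≤ a(n,1) ≤ b(n,1)` for `n ≥ 2`. -/
lemma master : ∀ n, 2 ≤ n →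
    (∀ j, 0 ≤ a n j) ∧ (∀ j, 0 ≤ b n j) ∧ (4 ≤ phi n) ∧
    (∀ j, a n j ≤ phi n * b n j) ∧ 1 ≤ a n 1 ∧ a n 1 ≤ b n 1 := by
  intro n
  induction n with
  | zero => omega
  | succ n ih =>
    intro hn
    rcases Nat.lt_or_ge n 2 with h | h
    · -- base case n+1 = 2
      have h1 : n = 1 := by omega
      subst h1
      refine ⟨fun j => ?_, fun j => ?_, by rw [phi_two], fun j => ?_, ?_, ?_⟩ <;>
        simp [a, b, phi, F] <;> (try split_ifs) <;> norm_num
    · obtain ⟨k, rfl⟩ : ∃ k, n = k + 2 := ⟨n - 2, by omega⟩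
      obtain ⟨ha, hb, hphi, hab, ha1, hab1⟩ := ih h
      have hterm : ∀ j ∈ Finset.Icc 1 (k+2),
          0 ≤ phi (k+2) * b (k+2) j - a (k+2) j := fun j _ => by
        have := hab j; linarith
      have h1 : (3:ℚ) ≤ phi (k+2) * b (k+2) 1 - a (k+2) 1 := by
        nlinarith [hb 1, ha 1]
      have hsum : (3:ℚ) ≤ ∑ j ∈ Finset.Icc 1 (k+2),
          (phi (k+2) * b (k+2) j - a (k+2) j) := by
        have h2 := Finset.single_le_sum hterm (show 1 ∈ Finset.Icc 1 (k+2) by simp)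
        linarith
      have hphi3 : 36 ≤ phi (k+3) := by rw [phi_succ]; linarith
      have hatop : a (k+3) (k+3) = phi (k+3) := a_top (k+3) (by omega)
      have hbtop : b (k+3) (k+3) = 1 := b_top (k+1)
      have hasucc : ∀ j, j ≠ k+3 → a (k+3) j = 4 * a (k+2) j :=
        fun j hj => a_succ (k+1) j hj
      have hbsucc : ∀ j, j ≠ k+3 → b (k+3) j = (1 + 3 * phi (k+2)) * b (k+2) j :=
        fun j hj => b_succ (k+1) j hj
      refine ⟨fun j => ?_, fun j => ?_, by linarith, fun j => ?_, ?_, ?_⟩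
      · by_cases hj : j = k + 3
        · subst hj; rw [hatop]; linarith
        · rw [hasucc j hj]; have := ha j; linarith
      · by_cases hj : j = k + 3
        · subst hj; rw [hbtop]; norm_num
        · rw [hbsucc j hj]; have := hb j; nlinarith
      · by_cases hj : j = k + 3
        · subst hj; rw [hatop, hbtop]; linarith
        · rw [hasucc j hj, hbsucc j hj]
          have h2 := hab j
          have h3 := hb j
          have key : 0 ≤ phi (k+3) + 3 * phi (k+3) * phi (k+2) - 4 * phi (k+2) := by
            nlinarith
          nlinarith [mul_nonneg h3 key]
      · rw [hasucc 1 (by omega)]; linarith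
      · rw [hasucc 1 (by omega), hbsucc 1 (by omega)]
        nlinarith [hb 1]

theorem phi_growth (n : ℕ) (hn : 3 ≤ n) : 3 * (phi (n-1))^2 ≤ phi n := by
  rcases Nat.lt_or_ge n 4 with h | h
  · have h1 : n = 3 := by omega
    subst h1
    norm_num [phi_two, phi_three]
  · obtain ⟨k, rfl⟩ : ∃ k, n = k + 4 := ⟨n - 4, by omega⟩
    have hn1 : k + 4 - 1 = k + 3 := rfl
    rw [hn1]
    obtain ⟨ha2, hb2, hphi2, hab2, -, -⟩ := master (k+2) (by omega)
    obtain ⟨-, -, hphi3, -, -, -⟩ := master (k+3) (by omega)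
    set Tm : ℚ := ∑ j ∈ Finset.Icc 1 (k+2), b (k+2) j with hTm
    set Am : ℚ := ∑ j ∈ Finset.Icc 1 (k+2), a (k+2) j with hAm
    have hTm0 : 0 ≤ Tm := Finset.sum_nonneg fun j _ => hb2 j
    have hAm0 : 0 ≤ Am := Finset.sum_nonneg fun j _ => ha2 j
    have E2 : phi (k+3) = 12 * (phi (k+2) * Tm - Am) := by
      rw [phi_succ k, Finset.sum_sub_distrib, ← Finset.mul_sum, hTm, hAm]
    have hbs : ∀ j ∈ Finset.Icc 1 (k+2),
        b (k+3) j = (1 + 3 * phi (k+2)) * b (k+2) j := fun j hj => by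
      rw [Finset.mem_Icc] at hj
      exact b_succ (k+1) j (by omega)
    have has : ∀ j ∈ Finset.Icc 1 (k+2),
        a (k+3) j = 4 * a (k+2) j := fun j hj => by
      rw [Finset.mem_Icc] at hj
      exact a_succ (k+1) j (by omega)
    have hsplitb : ∑ j ∈ Finset.Icc 1 (k+3), b (k+3) j
        = ∑ j ∈ Finset.Icc 1 (k+2), b (k+3) j + b (k+3) (k+3) :=
      Finset.sum_Icc_succ_top (by omega) _
    have hsplita : ∑ j ∈ Finset.Icc 1 (k+3), a (k+3) j
        = ∑ j ∈ Finset.Icc 1 (k+2), a (k+3) j + a (k+3) (k+3) :=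
      Finset.sum_Icc_succ_top (by omega) _
    have hbsum : ∑ j ∈ Finset.Icc 1 (k+3), b (k+3) j
        = (1 + 3 * phi (k+2)) * Tm + 1 := by
      rw [hsplitb, show b (k+3) (k+3) = 1 from b_top (k+1),
        Finset.sum_congr rfl hbs, ← Finset.mul_sum, hTm]
    have hasum : ∑ j ∈ Finset.Icc 1 (k+3), a (k+3) j
        = 4 * Am + phi (k+3) := by
      rw [hsplita, a_top (k+3) (by omega),
        Finset.sum_congr rfl has, ← Finset.mul_sum, hAm]
    have E1 : phi (k+4) = 12 * (phi (k+3) * ((1 + 3 * phi (k+2)) * Tm + 1)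
        - (4 * Am + phi (k+3))) := by
      have e0 : phi (k+4) = 12 * ∑ j ∈ Finset.Icc 1 (k+3),
          (phi (k+3) * b (k+3) j - a (k+3) j) := phi_succ (k+1)
      rw [e0, Finset.sum_sub_distrib, ← Finset.mul_sum, hbsum, hasum]
    nlinarith [mul_nonneg hTm0 (by linarith : (0:ℚ) ≤ phi (k+3)),
      mul_nonneg hAm0 (by linarith : (0:ℚ) ≤ phi (k+3) - 4)]
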